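/- Let g : [0,∞) → ℝ be g(r) = r/(1+r). Let x, y ∈ ℝ^d with x ≠ y, let 0 ≤ L < 1, and let v ∈ ℝ^d with |v| ≤ L·|x−y|. Then g(|x − y + v|) − g(|x − y|) − g′(|x−y|)·⟨(x−y)/|x−y|, v⟩ ≤ (L²/(1−L))·|x−y|, where g′(r) = 1/(1+r)². -/

import Mathlib

set_option maxHeartbeats 1000000 in
lemma g_taylor_aux (r s i n L : ℝ) (hr : 0 < r) (hs : 0 ≤ s) (hn : 0 ≤ n)
    (hL0 : 0 ≤ L) (hL1 : L < 1) (hv : n ≤ L * r) (hcs : |i| ≤ r * n)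
    (hsq : s ^ 2 = r ^ 2 + 2 * i + n ^ 2) :
    s / (1 + s) - r / (1 + r) - (1 / (1 + r) ^ 2) * (i / r)
      ≤ L ^ 2 / (1 - L) * r := by
  have hL1' : 0 < 1 - L := by linarith
  have hcs1 : -(r * n) ≤ i := neg_le_of_abs_le hcs
  have hcs2 : i ≤ r * n := le_of_abs_le hcs
  obtain ⟨a, hadef⟩ : ∃ a : ℝ, a = r + i / r := ⟨_, rfl⟩
  have ha : (1 - L) * r ≤ a := by
    rw [hadef]
    have : -(L * r) ≤ i / r := by
      rw [le_div_iff₀ hr]; nlinarith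
    nlinarith
  have hapos : 0 < a := lt_of_lt_of_le (by nlinarith) ha
  have hv2 : n ^ 2 ≤ L ^ 2 * r ^ 2 := by nlinarith
  have hsa : s - a ≤ L ^ 2 / (1 - L) * r := by
    have ha2 : a ^ 2 = r ^ 2 + 2 * i + (i / r) ^ 2 := by
      rw [hadef]; field_simp; ring
    have h1 : s ^ 2 - a ^ 2 ≤ L ^ 2 * r ^ 2 := by
      nlinarith [sq_nonneg (i / r)]
    have h2 : (1 - L) * r ≤ s + a := by nlinarith
    have h3 : (s - a) * ((1 - L) * r) ≤ L ^ 2 * r ^ 2 := by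
      rcases le_or_gt (s - a) 0 with h | h
      · have hnp : (s - a) * ((1 - L) * r) ≤ 0 :=
          mul_nonpos_of_nonpos_of_nonneg h (by positivity)
        nlinarith [sq_nonneg (L * r)]
      · nlinarith [mul_le_mul_of_nonneg_left h2 (le_of_lt h)]
    rw [div_mul_eq_mul_div, le_div_iff₀ hL1']
    nlinarith
  have h1s : 0 < 1 + s := by linarith
  have h1r : 0 < 1 + r := by linarith
  have hconc : s / (1 + s) - r / (1 + r) ≤ (1 / (1 + r) ^ 2) * (s - r) := by
    have key : (1 / (1 + r) ^ 2) * (s - r) - (s / (1 + s) - r / (1 + r))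
        = (s - r) ^ 2 / ((1 + s) * (1 + r) ^ 2) := by
      field_simp
      ring
    have hpos : 0 ≤ (s - r) ^ 2 / ((1 + s) * (1 + r) ^ 2) := by positivity
    linarith [key, hpos]
  have hc1 : 0 < 1 / (1 + r) ^ 2 := by positivity
  have hc2 : 1 / (1 + r) ^ 2 ≤ 1 := by
    rw [div_le_one (by positivity)]; nlinarith
  have hM : 0 ≤ L ^ 2 / (1 - L) * r := by positivity
  calc s / (1 + s) - r / (1 + r) - (1 / (1 + r) ^ 2) * (i / r)
      ≤ (1 / (1 + r) ^ 2) * (s - r) - (1 / (1 + r) ^ 2) * (i / r) := by linarith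
    _ = (1 / (1 + r) ^ 2) * (s - a) := by rw [hadef]; ring
    _ ≤ L ^ 2 / (1 - L) * r := by
        rcases le_or_gt (s - a) 0 with h | h
        · nlinarith
        · nlinarith


/-- Let `g(r) = r/(1+r)` with `g'(r) = 1/(1+r)²`. For `x ≠ y` in `ℝ^d`, `0 ≤ L < 1`
and `v` with `|v| ≤ L |x - y|`, one has
`g(|x - y + v|) - g(|x - y|) - g'(|x - y|) ⟨(x-y)/|x-y|, v⟩ ≤ (L²/(1-L)) |x - y|`. -/
theorem g_taylor_jump_estimate
    {d : ℕ} (x y v : EuclideanSpace ℝ (Fin d)) (hxy : x ≠ y)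
    (L : ℝ) (hL0 : 0 ≤ L) (hL1 : L < 1)
    (hv : ‖v‖ ≤ L * ‖x - y‖) :
    ‖x - y + v‖ / (1 + ‖x - y + v‖) - ‖x - y‖ / (1 + ‖x - y‖)
        - (1 / (1 + ‖x - y‖) ^ 2) * ((inner ℝ (x - y) v : ℝ) / ‖x - y‖)
      ≤ (L ^ 2 / (1 - L)) * ‖x - y‖ := by
  exact g_taylor_aux ‖x - y‖ ‖x - y + v‖ (inner ℝ (x - y) v : ℝ) ‖v‖ L
    (norm_pos_iff.2 (sub_ne_zero.2 hxy)) (norm_nonneg _) (norm_nonneg _)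
    hL0 hL1 hv (abs_real_inner_le_norm _ _) (norm_add_sq_real _ _)
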